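/- The trace polynomial theorem: for every word w in the free group F₂ = ⟨x,y⟩, there is a polynomial P_w(s,t,u) ∈ ℤ[s,t,u] such that for every commutative ring R and all A, B ∈ SL₂(R), tr(w(A,B)) = P_w(tr(A), tr(B), tr(AB)). -/

import Mathlib

open Matrix MatrixGroups

namespace TracePolyAux

variable {R : Type} [CommRing R]

local notation "M2" => Matrix (Fin 2) (Fin 2) R

lemma sl2_cayley (A : SL(2,R)) :
    (A : M2) * A = Matrix.trace (A : M2) • (A : M2) - 1 := by
  have h := A.2
  rw [Matrix.det_fin_two] at h
  rw [← Matrix.ext_iff]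
  simp only [Fin.forall_fin_two, Matrix.mul_apply, Fin.sum_univ_two, Matrix.trace_fin_two,
    Matrix.sub_apply, Matrix.smul_apply, Matrix.one_apply, smul_eq_mul]
  norm_num
  refine ⟨⟨?_, by ring⟩, by ring, ?_⟩ <;> linear_combination -h

lemma sl2_comm (A B : SL(2,R)) :
    (B : M2) * A =
      Matrix.trace (A : M2) • (B : M2)
      + Matrix.trace (B : M2) • (A : M2)
      + (Matrix.trace ((A * B : SL(2,R)) : M2)
         - Matrix.trace (A : M2) * Matrix.trace (B : M2)) • (1 : M2)
      - (A : M2) * B := by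
  rw [← Matrix.ext_iff]
  simp only [Fin.forall_fin_two, Matrix.mul_apply, Fin.sum_univ_two, Matrix.trace_fin_two,
    Matrix.sub_apply, Matrix.add_apply, Matrix.smul_apply, Matrix.one_apply, smul_eq_mul,
    Matrix.SpecialLinearGroup.coe_mul]
  norm_num
  and_intros <;> ring

lemma sl2_inv (A : SL(2,R)) :
    ((A⁻¹ : SL(2,R)) : M2) = Matrix.trace (A : M2) • (1 : M2) - A := by
  rw [Matrix.SpecialLinearGroup.coe_inv, Matrix.adjugate_fin_two]
  rw [← Matrix.ext_iff]
  simp only [Fin.forall_fin_two, Matrix.trace_fin_two, Matrix.sub_apply, Matrix.smul_apply,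
    Matrix.one_apply, smul_eq_mul, Matrix.of_apply, Matrix.cons_val', Matrix.cons_val_zero,
    Matrix.cons_val_one, Matrix.head_cons, Matrix.head_fin_const, Matrix.empty_val',
    Matrix.cons_val_fin_one]
  norm_num

/-- The basis `![1, A, B, AB]`. -/
def E (A B : SL(2,R)) : Fin 4 → M2 := ![1, (A : M2), (B : M2), (A : M2) * B]

/-- The trace vector `![tr A, tr B, tr AB]`. -/
def v (A B : SL(2,R)) : Fin 3 → R :=
  ![Matrix.trace (A : M2), Matrix.trace (B : M2), Matrix.trace ((A * B : SL(2,R)) : M2)]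

open MvPolynomial in
/-- Structure constants: `E i * E j = ∑ k, tab i j k • E k`. -/
noncomputable def tab : Fin 4 → Fin 4 → Fin 4 → MvPolynomial (Fin 3) ℤ :=
![![![1,0,0,0], ![0,1,0,0], ![0,0,1,0], ![0,0,0,1]],
  ![![0,1,0,0], ![-1, X 0, 0, 0], ![0,0,0,1], ![0,0,-1, X 0]],
  ![![0,0,1,0], ![X 2 - X 0 * X 1, X 1, X 0, -1], ![-1,0, X 1,0], ![-X 0,1, X 2,0]],
  ![![0,0,0,1], ![-X 1, X 2, 1, 0], ![0,-1,0, X 1], ![-1,0,0, X 2]]]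

-- derived product identities
lemma hAAB (A B : SL(2,R)) : (A : M2) * ((A : M2) * B) =
    Matrix.trace (A : M2) • ((A : M2) * B) - (B : M2) := by
  rw [← mul_assoc, sl2_cayley A, sub_mul, smul_mul_assoc, one_mul]

lemma hABAB (A B : SL(2,R)) : ((A : M2) * B) * ((A : M2) * B) =
    Matrix.trace ((A * B : SL(2,R)) : M2) • ((A : M2) * B) - 1 := by
  have := sl2_cayley (A * B)
  simpa only [Matrix.SpecialLinearGroup.coe_mul] using this

lemma hABB (A B : SL(2,R)) : ((A : M2) * B) * (B : M2) =
    Matrix.trace (B : M2) • ((A : M2) * B) - (A : M2) := by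
  rw [mul_assoc, sl2_cayley B, mul_sub, mul_smul_comm, mul_one]

lemma hBAB (A B : SL(2,R)) : (B : M2) * ((A : M2) * B) =
    (A : M2) + Matrix.trace ((A * B : SL(2,R)) : M2) • (B : M2)
      - Matrix.trace (A : M2) • (1 : M2) := by
  rw [← mul_assoc, sl2_comm A B]
  rw [sub_mul, add_mul, add_mul, smul_mul_assoc, smul_mul_assoc, smul_mul_assoc, one_mul,
    mul_assoc, sl2_cayley B]
  rw [mul_sub, mul_smul_comm, mul_one]
  module

lemma hABA (A B : SL(2,R)) : ((A : M2) * B) * (A : M2) =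
    Matrix.trace ((A * B : SL(2,R)) : M2) • (A : M2) + (B : M2)
      - Matrix.trace (B : M2) • (1 : M2) := by
  rw [mul_assoc, sl2_comm A B]
  rw [mul_sub, mul_add, mul_add, mul_smul_comm, mul_smul_comm, mul_smul_comm, mul_one,
    ← mul_assoc, sl2_cayley A]
  rw [sub_mul, smul_mul_assoc, one_mul]
  module

open MvPolynomial in
lemma table_spec (A B : SL(2,R)) (i j : Fin 4) :
    E A B i * E A B j = ∑ k : Fin 4, (aeval (v A B)) (tab i j k) • E A B k := by
  have hBA := sl2_comm A B
  have hA := sl2_cayley A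
  have hB := sl2_cayley B
  have h4 : ∀ k : Fin 4, k = 0 ∨ k = 1 ∨ k = 2 ∨ k = 3 := by decide
  rcases h4 i with rfl | rfl | rfl | rfl <;> rcases h4 j with rfl | rfl | rfl | rfl
  · simp only [E, v, tab, Fin.sum_univ_four, Matrix.cons_val_zero, Matrix.cons_val_one,
      Matrix.head_cons, Matrix.cons_val_two, Matrix.tail_cons, Matrix.cons_val_three,
      _root_.map_one, _root_.map_zero, _root_.map_neg, _root_.map_sub, _root_.map_mul, aeval_X,
      one_smul, zero_smul, neg_smul, add_zero, zero_add, one_mul, mul_one]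
    try rfl
  · simp only [E, v, tab, Fin.sum_univ_four, Matrix.cons_val_zero, Matrix.cons_val_one,
      Matrix.head_cons, Matrix.cons_val_two, Matrix.tail_cons, Matrix.cons_val_three,
      _root_.map_one, _root_.map_zero, _root_.map_neg, _root_.map_sub, _root_.map_mul, aeval_X,
      one_smul, zero_smul, neg_smul, add_zero, zero_add, one_mul, mul_one]
    try rfl
  · simp only [E, v, tab, Fin.sum_univ_four, Matrix.cons_val_zero, Matrix.cons_val_one,
      Matrix.head_cons, Matrix.cons_val_two, Matrix.tail_cons, Matrix.cons_val_three,
      _root_.map_one, _root_.map_zero, _root_.map_neg, _root_.map_sub, _root_.map_mul, aeval_X,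
      one_smul, zero_smul, neg_smul, add_zero, zero_add, one_mul, mul_one]
    try rfl
  · simp only [E, v, tab, Fin.sum_univ_four, Matrix.cons_val_zero, Matrix.cons_val_one,
      Matrix.head_cons, Matrix.cons_val_two, Matrix.tail_cons, Matrix.cons_val_three,
      _root_.map_one, _root_.map_zero, _root_.map_neg, _root_.map_sub, _root_.map_mul, aeval_X,
      one_smul, zero_smul, neg_smul, add_zero, zero_add, one_mul, mul_one]
    try rfl
  · simp only [E, v, tab, Fin.sum_univ_four, Matrix.cons_val_zero, Matrix.cons_val_one,
      Matrix.head_cons, Matrix.cons_val_two, Matrix.tail_cons, Matrix.cons_val_three,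
      _root_.map_one, _root_.map_zero, _root_.map_neg, _root_.map_sub, _root_.map_mul, aeval_X,
      one_smul, zero_smul, neg_smul, add_zero, zero_add, one_mul, mul_one]
    try rfl
  · simp only [E, v, tab, Fin.sum_univ_four, Matrix.cons_val_zero, Matrix.cons_val_one,
      Matrix.head_cons, Matrix.cons_val_two, Matrix.tail_cons, Matrix.cons_val_three,
      _root_.map_one, _root_.map_zero, _root_.map_neg, _root_.map_sub, _root_.map_mul, aeval_X,
      one_smul, zero_smul, neg_smul, add_zero, zero_add, one_mul, mul_one]
    rw [hA]; module
  · simp only [E, v, tab, Fin.sum_univ_four, Matrix.cons_val_zero, Matrix.cons_val_one,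
      Matrix.head_cons, Matrix.cons_val_two, Matrix.tail_cons, Matrix.cons_val_three,
      _root_.map_one, _root_.map_zero, _root_.map_neg, _root_.map_sub, _root_.map_mul, aeval_X,
      one_smul, zero_smul, neg_smul, add_zero, zero_add, one_mul, mul_one]
    try rfl
  · simp only [E, v, tab, Fin.sum_univ_four, Matrix.cons_val_zero, Matrix.cons_val_one,
      Matrix.head_cons, Matrix.cons_val_two, Matrix.tail_cons, Matrix.cons_val_three,
      _root_.map_one, _root_.map_zero, _root_.map_neg, _root_.map_sub, _root_.map_mul, aeval_X,
      one_smul, zero_smul, neg_smul, add_zero, zero_add, one_mul, mul_one]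
    rw [hAAB A B]; module
  · simp only [E, v, tab, Fin.sum_univ_four, Matrix.cons_val_zero, Matrix.cons_val_one,
      Matrix.head_cons, Matrix.cons_val_two, Matrix.tail_cons, Matrix.cons_val_three,
      _root_.map_one, _root_.map_zero, _root_.map_neg, _root_.map_sub, _root_.map_mul, aeval_X,
      one_smul, zero_smul, neg_smul, add_zero, zero_add, one_mul, mul_one]
    try rfl
  · simp only [E, v, tab, Fin.sum_univ_four, Matrix.cons_val_zero, Matrix.cons_val_one,
      Matrix.head_cons, Matrix.cons_val_two, Matrix.tail_cons, Matrix.cons_val_three,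
      _root_.map_one, _root_.map_zero, _root_.map_neg, _root_.map_sub, _root_.map_mul, aeval_X,
      one_smul, zero_smul, neg_smul, add_zero, zero_add, one_mul, mul_one]
    rw [hBA]; module
  · simp only [E, v, tab, Fin.sum_univ_four, Matrix.cons_val_zero, Matrix.cons_val_one,
      Matrix.head_cons, Matrix.cons_val_two, Matrix.tail_cons, Matrix.cons_val_three,
      _root_.map_one, _root_.map_zero, _root_.map_neg, _root_.map_sub, _root_.map_mul, aeval_X,
      one_smul, zero_smul, neg_smul, add_zero, zero_add, one_mul, mul_one]
    rw [hB]; module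
  · simp only [E, v, tab, Fin.sum_univ_four, Matrix.cons_val_zero, Matrix.cons_val_one,
      Matrix.head_cons, Matrix.cons_val_two, Matrix.tail_cons, Matrix.cons_val_three,
      _root_.map_one, _root_.map_zero, _root_.map_neg, _root_.map_sub, _root_.map_mul, aeval_X,
      one_smul, zero_smul, neg_smul, add_zero, zero_add, one_mul, mul_one]
    rw [hBAB A B]; module
  · simp only [E, v, tab, Fin.sum_univ_four, Matrix.cons_val_zero, Matrix.cons_val_one,
      Matrix.head_cons, Matrix.cons_val_two, Matrix.tail_cons, Matrix.cons_val_three,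
      _root_.map_one, _root_.map_zero, _root_.map_neg, _root_.map_sub, _root_.map_mul, aeval_X,
      one_smul, zero_smul, neg_smul, add_zero, zero_add, one_mul, mul_one]
    try rfl
  · simp only [E, v, tab, Fin.sum_univ_four, Matrix.cons_val_zero, Matrix.cons_val_one,
      Matrix.head_cons, Matrix.cons_val_two, Matrix.tail_cons, Matrix.cons_val_three,
      _root_.map_one, _root_.map_zero, _root_.map_neg, _root_.map_sub, _root_.map_mul, aeval_X,
      one_smul, zero_smul, neg_smul, add_zero, zero_add, one_mul, mul_one]
    rw [hABA A B]; module
  · simp only [E, v, tab, Fin.sum_univ_four, Matrix.cons_val_zero, Matrix.cons_val_one,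
      Matrix.head_cons, Matrix.cons_val_two, Matrix.tail_cons, Matrix.cons_val_three,
      _root_.map_one, _root_.map_zero, _root_.map_neg, _root_.map_sub, _root_.map_mul, aeval_X,
      one_smul, zero_smul, neg_smul, add_zero, zero_add, one_mul, mul_one]
    rw [hABB A B]; module
  · simp only [E, v, tab, Fin.sum_univ_four, Matrix.cons_val_zero, Matrix.cons_val_one,
      Matrix.head_cons, Matrix.cons_val_two, Matrix.tail_cons, Matrix.cons_val_three,
      _root_.map_one, _root_.map_zero, _root_.map_neg, _root_.map_sub, _root_.map_mul, aeval_X,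
      one_smul, zero_smul, neg_smul, add_zero, zero_add, one_mul, mul_one]
    rw [hABAB A B]; module

end TracePolyAux

open TracePolyAux MvPolynomial

theorem trace_polynomial (w : FreeGroup (Fin 2)) :
    ∃ P : MvPolynomial (Fin 3) ℤ,
      ∀ (R : Type) [CommRing R] (A B : SL(2, R)),
        Matrix.trace ((FreeGroup.lift ![A, B] w : SL(2, R)) : Matrix (Fin 2) (Fin 2) R) =
          MvPolynomial.aeval
            ![Matrix.trace ((A : Matrix (Fin 2) (Fin 2) R)),
              Matrix.trace ((B : Matrix (Fin 2) (Fin 2) R)),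
              Matrix.trace ((A * B : SL(2, R)) : Matrix (Fin 2) (Fin 2) R)] P := by
  have key : ∃ c : Fin 4 → MvPolynomial (Fin 3) ℤ,
      ∀ (R : Type) [CommRing R] (A B : SL(2, R)),
        ((FreeGroup.lift ![A, B] w : SL(2, R)) : Matrix (Fin 2) (Fin 2) R) =
          ∑ i : Fin 4, (aeval (v A B)) (c i) • E A B i := by
    induction w using FreeGroup.induction_on with
    | C1 =>
      refine ⟨![1, 0, 0, 0], fun R _ A B => ?_⟩
      simp [E, Fin.sum_univ_four]
    | of x =>
      have h2 : ∀ y : Fin 2, y = 0 ∨ y = 1 := by decide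
      rcases h2 x with rfl | rfl
      · refine ⟨![0, 1, 0, 0], fun R _ A B => ?_⟩
        have h : (FreeGroup.lift ![A, B]) (FreeGroup.of (0 : Fin 2)) = A := by
          rw [FreeGroup.lift_apply_of]
          simp
        rw [h]
        simp [E, Fin.sum_univ_four]
      · refine ⟨![0, 0, 1, 0], fun R _ A B => ?_⟩
        have h : (FreeGroup.lift ![A, B]) (FreeGroup.of (1 : Fin 2)) = B := by
          rw [FreeGroup.lift_apply_of]
          simp
        rw [h]
        simp [E, Fin.sum_univ_four]
    | inv_of x _ =>
      have h2 : ∀ y : Fin 2, y = 0 ∨ y = 1 := by decide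
      rcases h2 x with rfl | rfl
      · refine ⟨![X 0, -1, 0, 0], fun R _ A B => ?_⟩
        have h : (FreeGroup.lift ![A, B]) ((FreeGroup.of (0 : Fin 2))⁻¹) = A⁻¹ := by
          rw [map_inv, FreeGroup.lift_apply_of]
          simp
        rw [h, sl2_inv A]
        simp [E, v, Fin.sum_univ_four]
        abel
      · refine ⟨![X 1, 0, -1, 0], fun R _ A B => ?_⟩
        have h : (FreeGroup.lift ![A, B]) ((FreeGroup.of (1 : Fin 2))⁻¹) = B⁻¹ := by
          rw [map_inv, FreeGroup.lift_apply_of]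
          simp
        rw [h, sl2_inv B]
        simp [E, v, Fin.sum_univ_four]
        abel
    | mul x y hx hy =>
      obtain ⟨c, hc⟩ := hx
      obtain ⟨d, hd⟩ := hy
      refine ⟨fun k => ∑ i : Fin 4, ∑ j : Fin 4, c i * d j * tab i j k,
        fun R _ A B => ?_⟩
      rw [_root_.map_mul, Matrix.SpecialLinearGroup.coe_mul, hc R A B, hd R A B,
        Finset.sum_mul_sum]
      have step : ∀ i j : Fin 4,
          ((aeval (v A B)) (c i) • E A B i) * ((aeval (v A B)) (d j) • E A B j)
            = ∑ k : Fin 4, (aeval (v A B)) (c i * d j * tab i j k) • E A B k := by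
        intro i j
        rw [smul_mul_smul_comm, table_spec, Finset.smul_sum]
        simp only [smul_smul, _root_.map_mul]
      calc (∑ i : Fin 4, ∑ j : Fin 4,
              ((aeval (v A B)) (c i) • E A B i) * ((aeval (v A B)) (d j) • E A B j))
          = ∑ i : Fin 4, ∑ j : Fin 4, ∑ k : Fin 4,
              (aeval (v A B)) (c i * d j * tab i j k) • E A B k :=
            Finset.sum_congr rfl fun i _ => Finset.sum_congr rfl fun j _ => step i j
        _ = ∑ i : Fin 4, ∑ k : Fin 4, ∑ j : Fin 4,
              (aeval (v A B)) (c i * d j * tab i j k) • E A B k :=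
            Finset.sum_congr rfl fun i _ => Finset.sum_comm
        _ = ∑ k : Fin 4, ∑ i : Fin 4, ∑ j : Fin 4,
              (aeval (v A B)) (c i * d j * tab i j k) • E A B k :=
            Finset.sum_comm
        _ = ∑ k : Fin 4, (aeval (v A B))
              (∑ i : Fin 4, ∑ j : Fin 4, c i * d j * tab i j k) • E A B k := by
            simp only [map_sum, Finset.sum_smul]
  obtain ⟨c, hc⟩ := key
  refine ⟨C 2 * c 0 + X 0 * c 1 + X 1 * c 2 + X 2 * c 3, fun R _ A B => ?_⟩
  rw [hc R A B]
  simp only [Fin.sum_univ_four, E, v, Matrix.trace_add, Matrix.trace_smul, Matrix.trace_one,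
    _root_.map_add, _root_.map_mul, aeval_X, aeval_C, Fintype.card_fin, map_ofNat, Matrix.cons_val_zero, Matrix.cons_val_one,
    Matrix.head_cons, Matrix.cons_val_two, Matrix.tail_cons, Matrix.cons_val_three,
    smul_eq_mul, Matrix.SpecialLinearGroup.coe_mul]
  push_cast
  ring
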